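/- Let F and B be n × n column-stochastic matrices, let 0 < α₁, α₂, α₃ < 1, let d ∈ ℝⁿ, and let t* be the unique solution of the RepRank equation t = α₁ F P₊(t) + α₂ B P₋(t) + α₃ d. Then the iterates t⁽ᵏ⁺¹⁾ = α₁ F P₊(t⁽ᵏ⁾) + α₂ B P₋(t⁽ᵏ⁾) + α₃ d satisfy the geometric error bound ‖t⁽ᵏ⁾ − t*‖₁ ≤ (max(α₁, α₂))ᵏ ‖t⁽⁰⁾ − t*‖₁ for all k ≥ 0 and any initial vector t⁽⁰⁾ ∈ ℝⁿ. -/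
import Mathlib


open Finset Filter

/-- Replace negative components by zero. -/
def Ppos {n : ℕ} (t : Fin n → ℝ) : Fin n → ℝ := fun i => max (t i) 0

/-- Replace positive components by zero. -/
def Pneg {n : ℕ} (t : Fin n → ℝ) : Fin n → ℝ := fun i => min (t i) 0

/-- ℓ¹ norm on ℝⁿ. -/
def l1 {n : ℕ} (x : Fin n → ℝ) : ℝ := ∑ i, |x i|

/-- A matrix is column-stochastic if entries are nonnegative and each column sums to 1. -/
def ColStochastic {n : ℕ} (F : Matrix (Fin n) (Fin n) ℝ) : Prop :=
  (∀ i j, 0 ≤ F i j) ∧ ∀ j, ∑ i, F i j = 1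

lemma l1_nonneg {n : ℕ} (x : Fin n → ℝ) : 0 ≤ l1 x :=
  Finset.sum_nonneg fun i _ => abs_nonneg _

lemma l1_add_le {n : ℕ} (x y : Fin n → ℝ) : l1 (x + y) ≤ l1 x + l1 y := by
  simpa [l1, ← Finset.sum_add_distrib] using Finset.sum_le_sum fun i (_ : i ∈ Finset.univ) => abs_add_le (x i) (y i)

lemma l1_smul {n : ℕ} (c : ℝ) (x : Fin n → ℝ) : l1 (c • x) = |c| * l1 x := by
  simp [l1, abs_mul, Finset.mul_sum]

lemma l1_mulVec_le {n : ℕ} {F : Matrix (Fin n) (Fin n) ℝ} (hF : ColStochastic F)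
    (v : Fin n → ℝ) : l1 (F.mulVec v) ≤ l1 v := by
  calc l1 (F.mulVec v) = ∑ i, |∑ j, F i j * v j| := by
        simp [l1, Matrix.mulVec, dotProduct]
    _ ≤ ∑ i, ∑ j, F i j * |v j| := by
        refine Finset.sum_le_sum fun i _ => (Finset.abs_sum_le_sum_abs _ _).trans ?_
        refine Finset.sum_le_sum fun j _ => ?_
        rw [abs_mul, abs_of_nonneg (hF.1 i j)]
    _ = ∑ j, (∑ i, F i j) * |v j| := by
        rw [Finset.sum_comm]; simp [Finset.sum_mul]
    _ = l1 v := by simp [hF.2, l1]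

lemma abs_split (a b : ℝ) : |max a 0 - max b 0| + |min a 0 - min b 0| = |a - b| := by
  have ha := max_add_min a 0
  have hb := max_add_min b 0
  rcases le_total a b with h | h
  · have h1 : max a 0 ≤ max b 0 := max_le_max h le_rfl
    have h2 : min a 0 ≤ min b 0 := min_le_min h le_rfl
    rw [abs_of_nonpos (by linarith), abs_of_nonpos (by linarith),
      abs_of_nonpos (by linarith)]
    linarith
  · have h1 : max b 0 ≤ max a 0 := max_le_max h le_rfl
    have h2 : min b 0 ≤ min a 0 := min_le_min h le_rfl
    rw [abs_of_nonneg (by linarith), abs_of_nonneg (by linarith),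
      abs_of_nonneg (by linarith)]
    linarith

lemma contraction_step {n : ℕ} {F B : Matrix (Fin n) (Fin n) ℝ}
    (hF : ColStochastic F) (hB : ColStochastic B)
    {α₁ α₂ : ℝ} (α₃ : ℝ) (hα₁ : 0 < α₁) (hα₂ : 0 < α₂) (d x y : Fin n → ℝ) :
    l1 ((α₁ • F.mulVec (Ppos x) + α₂ • B.mulVec (Pneg x) + α₃ • d)
      - (α₁ • F.mulVec (Ppos y) + α₂ • B.mulVec (Pneg y) + α₃ • d))
      ≤ max α₁ α₂ * l1 (x - y) := by
  have hdiff : (α₁ • F.mulVec (Ppos x) + α₂ • B.mulVec (Pneg x) + α₃ • d)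
      - (α₁ • F.mulVec (Ppos y) + α₂ • B.mulVec (Pneg y) + α₃ • d)
      = α₁ • F.mulVec (Ppos x - Ppos y) + α₂ • B.mulVec (Pneg x - Pneg y) := by
    simp only [Matrix.mulVec_sub, smul_sub]; abel
  rw [hdiff]
  calc l1 (α₁ • F.mulVec (Ppos x - Ppos y) + α₂ • B.mulVec (Pneg x - Pneg y))
      ≤ l1 (α₁ • F.mulVec (Ppos x - Ppos y)) + l1 (α₂ • B.mulVec (Pneg x - Pneg y)) :=
        l1_add_le _ _
    _ = α₁ * l1 (F.mulVec (Ppos x - Ppos y)) + α₂ * l1 (B.mulVec (Pneg x - Pneg y)) := by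
        rw [l1_smul, l1_smul, abs_of_pos hα₁, abs_of_pos hα₂]
    _ ≤ α₁ * l1 (Ppos x - Ppos y) + α₂ * l1 (Pneg x - Pneg y) := by
        gcongr
        · exact l1_mulVec_le hF _
        · exact l1_mulVec_le hB _
    _ ≤ max α₁ α₂ * l1 (Ppos x - Ppos y) + max α₁ α₂ * l1 (Pneg x - Pneg y) := by
        gcongr
        · exact l1_nonneg _
        · exact le_max_left _ _
        · exact l1_nonneg _
        · exact le_max_right _ _
    _ = max α₁ α₂ * l1 (x - y) := by
        rw [← mul_add]
        congr 1
        simp only [l1, ← Finset.sum_add_distrib]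
        exact Finset.sum_congr rfl fun i _ => by
          simpa [Ppos, Pneg] using abs_split (x i) (y i)

theorem repRank_geometric_error_bound {n : ℕ} (F B : Matrix (Fin n) (Fin n) ℝ)
    (hF : ColStochastic F) (hB : ColStochastic B)
    (α₁ α₂ α₃ : ℝ) (hα₁ : 0 < α₁) (hα₁' : α₁ < 1) (hα₂ : 0 < α₂) (hα₂' : α₂ < 1)
    (hα₃ : 0 < α₃) (hα₃' : α₃ < 1) (d : Fin n → ℝ)
    (tstar : Fin n → ℝ)
    (hstar : tstar = α₁ • F.mulVec (Ppos tstar) + α₂ • B.mulVec (Pneg tstar) + α₃ • d)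
    (u : ℕ → (Fin n → ℝ))
    (hu : ∀ k, u (k + 1) = α₁ • F.mulVec (Ppos (u k)) + α₂ • B.mulVec (Pneg (u k)) + α₃ • d)
    (k : ℕ) :
    l1 (u k - tstar) ≤ (max α₁ α₂) ^ k * l1 (u 0 - tstar) := by
  induction k with
  | zero => simp
  | succ k ih =>
    have hM : (0:ℝ) ≤ max α₁ α₂ := le_max_of_le_left hα₁.le
    calc l1 (u (k + 1) - tstar) ≤ max α₁ α₂ * l1 (u k - tstar) := by
          conv_lhs => rw [hu k, hstar]
          exact contraction_step hF hB α₃ hα₁ hα₂ d _ _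
      _ ≤ max α₁ α₂ * ((max α₁ α₂) ^ k * l1 (u 0 - tstar)) :=
          mul_le_mul_of_nonneg_left ih hM
      _ = (max α₁ α₂) ^ (k + 1) * l1 (u 0 - tstar) := by ring
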